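/- arXiv:2304.03723 — 2 statements merged into one kernel-verified Lean document; each statement's English description precedes it below -/
import Mathlib

section
/- Let V be a valuation domain and A a semilocal domain with the same quotient field as A ∩ V, and suppose every residue field of A ∩ V has at least s+1 elements where s is the number of maximal ideals of A. If A ∩ V is local, then A is local, the maximal ideal m_A of A is a prime ideal of A ∩ V, A equals the localization of A ∩ V at m_A, and the quotient (A ∩ V)/m_A is a valuation domain with quotient field A/m_A. -/
private lemma subring_isUnit_iff {K : Type*} [Field K] {S : Subring K} (x : ↥S) :
    IsUnit x ↔ ((x : K) ≠ 0 ∧ (x : K)⁻¹ ∈ S) := by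
  constructor
  · rintro ⟨u, rfl⟩
    have h1 : ((u.val : ↥S) : K) * (((u⁻¹ : (↥S)ˣ) : ↥S) : K) = 1 := by
      exact_mod_cast congrArg Subtype.val u.mul_inv
    have hx0 : ((u.val : ↥S) : K) ≠ 0 := fun h => by simp [h] at h1
    refine ⟨hx0, ?_⟩
    rw [inv_eq_of_mul_eq_one_right h1]
    exact (((u⁻¹ : (↥S)ˣ) : ↥S)).2
  · rintro ⟨hx0, hxi⟩
    exact isUnit_iff_exists_inv.mpr ⟨⟨_, hxi⟩, Subtype.ext (by simp [mul_inv_cancel₀ hx0])⟩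

/-- **Theorem 4.7(i).**
Let `V` be a valuation domain and `A` a semilocal domain with `s` maximal ideals, inside a
common quotient field `K` which is also the quotient field of `A ∩ V`, and suppose every
residue field of `A ∩ V` has at least `s + 1` elements.  If `A ∩ V` is local, then `A` is
local, the maximal ideal `m_A` of `A` (its set of nonunits) is a prime ideal `P` of
`A ∩ V`, `A` is the localization of `A ∩ V` at `P`, and the quotient `(A ∩ V)/P` is a
valuation domain with quotient field `A/m_A` (every element of the residue field of `A` is
a fraction of elements of `(A ∩ V)/P`, embedded via the inclusion `A ∩ V → A`). -/
theorem inf_valuation_local_structure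
    {K : Type*} [Field K] (A : Subring K) (V : ValuationSubring K) (s : ℕ)
    [Fintype (MaximalSpectrum A)] (hs : Fintype.card (MaximalSpectrum A) = s)
    (hfrac : ∀ x : K, ∃ a ∈ A ⊓ V.toSubring, ∃ b ∈ A ⊓ V.toSubring, b ≠ 0 ∧ x = a / b)
    (hres : ∀ m : Ideal ↥(A ⊓ V.toSubring), m.IsMaximal →
      ((s : Cardinal) + 1) ≤ Cardinal.mk (↥(A ⊓ V.toSubring) ⧸ m))
    (hloc : IsLocalRing ↥(A ⊓ V.toSubring)) :
    IsLocalRing A ∧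
      ∃ P : Ideal ↥(A ⊓ V.toSubring), P.IsPrime ∧
        (∀ x : ↥(A ⊓ V.toSubring), x ∈ P ↔
          ¬ IsUnit (⟨(x : K), (Subring.mem_inf.mp x.2).1⟩ : A)) ∧
        ((A : Set K) = {y : K | ∃ a s' : ↥(A ⊓ V.toSubring), s' ∉ P ∧
          y = (a : K) / (s' : K)}) ∧
        (∀ x y : ↥(A ⊓ V.toSubring),
          (∃ c : ↥(A ⊓ V.toSubring), y - c * x ∈ P) ∨
          (∃ c : ↥(A ⊓ V.toSubring), x - c * y ∈ P)) ∧
        (∀ a : K, a ∈ A → ∃ x y : ↥(A ⊓ V.toSubring), y ∉ P ∧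
          ∃ h : (y : K) * a - (x : K) ∈ A,
            ¬ IsUnit (⟨(y : K) * a - (x : K), h⟩ : A)) := by
  classical
  set R : Subring K := A ⊓ V.toSubring with hRdef
  haveI := hloc
  have hRA : ∀ x : K, x ∈ R → x ∈ A := fun x hx => (Subring.mem_inf.mp hx).1
  have hRV : ∀ x : K, x ∈ R → x ∈ V.toSubring := fun x hx => (Subring.mem_inf.mp hx).2
  have hmemR : ∀ x : K, x ∈ A → x ∈ V.toSubring → x ∈ R :=
    fun x h1 h2 => Subring.mem_inf.mpr ⟨h1, h2⟩
  have hUA : ∀ (x : ↥A), IsUnit x ↔ ((x:K) ≠ 0 ∧ (x:K)⁻¹ ∈ A) := fun x => subring_isUnit_iff x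
  have hUR : ∀ (x : ↥R), IsUnit x ↔ ((x:K) ≠ 0 ∧ (x:K)⁻¹ ∈ R) := fun x => subring_isUnit_iff x
  -- L1 : unit shift
  have L1 : ∀ a : K, a ∈ A → ∃ u : K, u ∈ R ∧ (a + u ≠ 0 ∧ (a + u)⁻¹ ∈ A) := by
    intro a ha
    by_contra hcon
    push_neg at hcon
    set m := IsLocalRing.maximalIdeal ↥R with hm
    have hcard' : Cardinal.mk (ULift (Fin (s+1))) ≤ Cardinal.mk (↥R ⧸ m) := by
      rw [Cardinal.mk_uLift, Cardinal.mk_fin, Cardinal.lift_natCast]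
      exact_mod_cast hres m (IsLocalRing.maximalIdeal.isMaximal ↥R)
    obtain ⟨f⟩ := (Cardinal.le_def _ _).mp hcard'
    choose t ht using fun j => Ideal.Quotient.mk_surjective (I := m) (f j)
    set α : ULift.{_} (Fin (s+1)) → ↥A := fun j => ⟨a + (t j : K), A.add_mem ha (hRA _ (t j).2)⟩
      with hα
    have hnu : ∀ j, ¬ IsUnit (α j) := by
      intro j hj
      rw [hUA] at hj
      exact hcon _ (t j).2 hj.1 hj.2
    choose I hImax hImem using fun j => exists_max_ideal_of_mem_nonunits (mem_nonunits_iff.mpr (hnu j))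
    obtain ⟨j, k, hjk, hg⟩ := Fintype.exists_ne_map_eq_of_card_lt
      (fun j => (⟨I j, hImax j⟩ : MaximalSpectrum ↥A))
      (by rw [Fintype.card_ulift, Fintype.card_fin, hs]; omega)
    have hIeq : I j = I k := congrArg MaximalSpectrum.asIdeal hg
    have hδmem : α j - α k ∈ I j := (I j).sub_mem (hImem j) (hIeq ▸ hImem k)
    have htk : ((t j - t k : ↥R) : K) = (t j : K) - (t k : K) := by push_cast; ring
    have hunitR : IsUnit (t j - t k) := by
      by_contra h
      have h1 : t j - t k ∈ m := (IsLocalRing.mem_maximalIdeal _).mpr (mem_nonunits_iff.mpr h)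
      have h2 : Ideal.Quotient.mk m (t j - t k) = 0 := Ideal.Quotient.eq_zero_iff_mem.mpr h1
      rw [RingHom.map_sub, ht, ht, sub_eq_zero] at h2
      exact hjk (f.injective h2)
    rw [hUR] at hunitR
    have hδcoe : ((α j - α k : ↥A) : K) = (t j : K) - (t k : K) := by
      rw [hα]; push_cast; ring
    have hδunit : IsUnit (α j - α k) := by
      rw [hUA, hδcoe]
      exact ⟨htk ▸ hunitR.1, hRA _ (htk ▸ hunitR.2)⟩
    exact (hImax j).ne_top (Ideal.eq_top_of_isUnit_mem _ hδmem hδunit)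
  -- L2 : fraction representation of elements of A outside V
  have L2 : ∀ a : K, a ∈ A → a ∉ V.toSubring →
      ∃ x b : K, x ∈ R ∧ b ∈ R ∧ (x ≠ 0 ∧ x⁻¹ ∈ A) ∧ (b ≠ 0 ∧ b⁻¹ ∈ A) ∧ a = x / b := by
    intro a ha hav
    obtain ⟨u, huR, hw0, hwi⟩ := L1 a ha
    have huV : u ∈ V.toSubring := hRV _ huR
    have hwV : a + u ∉ V.toSubring := by
      intro h
      exact hav (by simpa using Subring.sub_mem _ h huV)
    have hbV : (a + u)⁻¹ ∈ V.toSubring := by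
      rcases V.mem_or_inv_mem (a + u) with h | h
      · exact absurd ((V.mem_toSubring _).mpr h) hwV
      · exact (V.mem_toSubring _).mpr h
    have hbR : (a + u)⁻¹ ∈ R := hmemR _ hwi hbV
    have hbnu : ¬ IsUnit (⟨(a + u)⁻¹, hbR⟩ : ↥R) := by
      rw [hUR]
      rintro ⟨h0, hinv⟩
      rw [inv_inv] at hinv
      exact hwV (hRV _ hinv)
    have hub : (⟨u, huR⟩ : ↥R) * ⟨(a + u)⁻¹, hbR⟩ ∈ IsLocalRing.maximalIdeal ↥R :=
      Ideal.mul_mem_left _ _ ((IsLocalRing.mem_maximalIdeal _).mpr (mem_nonunits_iff.mpr hbnu))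
    have hone : IsUnit (1 - (⟨u, huR⟩ : ↥R) * ⟨(a + u)⁻¹, hbR⟩) := by
      by_contra h
      have h1 : (1 - (⟨u, huR⟩ : ↥R) * ⟨(a + u)⁻¹, hbR⟩) ∈ IsLocalRing.maximalIdeal ↥R :=
        (IsLocalRing.mem_maximalIdeal _).mpr (mem_nonunits_iff.mpr h)
      have h2 : (1 : ↥R) ∈ IsLocalRing.maximalIdeal ↥R := by
        have := add_mem h1 hub
        simpa using this
      exact (IsLocalRing.maximalIdeal.isMaximal ↥R).ne_top ((Ideal.eq_top_iff_one _).mpr h2)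
    rw [hUR] at hone
    have hcoe : ((1 - (⟨u, huR⟩ : ↥R) * ⟨(a + u)⁻¹, hbR⟩ : ↥R) : K) = 1 - u * (a + u)⁻¹ := by
      push_cast; ring
    rw [hcoe] at hone
    refine ⟨1 - u * (a + u)⁻¹, (a + u)⁻¹,
      Subring.sub_mem _ (Subring.one_mem _) (Subring.mul_mem _ huR hbR), hbR,
      ⟨hone.1, hRA _ hone.2⟩, ⟨inv_ne_zero hw0, by rw [inv_inv]; exact A.add_mem ha (hRA _ huR)⟩,
      ?_⟩
    field_simp
    ring
  -- L2u : elements of A outside V are units of A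
  have L2u : ∀ a : K, a ∈ A → a ∉ V.toSubring → (a ≠ 0 ∧ a⁻¹ ∈ A) := by
    intro a ha hav
    obtain ⟨x, b, hxR, hbR, hx, hb, heq⟩ := L2 a ha hav
    refine ⟨by rw [heq]; exact div_ne_zero hx.1 hb.1, ?_⟩
    rw [heq, inv_div, div_eq_mul_inv]
    exact A.mul_mem (hRA _ hbR) hx.2
  -- L3 : nonunits of A lie in R
  have L3 : ∀ a : K, a ∈ A → ¬(a ≠ 0 ∧ a⁻¹ ∈ A) → a ∈ R := by
    intro a ha hn
    by_cases hv : a ∈ V.toSubring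
    · exact hmemR _ ha hv
    · exact absurd (L2u a ha hv) hn
  -- L4 : nonunits of A are closed under addition
  have L4 : ∀ x y : K, x ∈ A → y ∈ A → ¬(x ≠ 0 ∧ x⁻¹ ∈ A) → ¬(y ≠ 0 ∧ y⁻¹ ∈ A) →
      ¬(x + y ≠ 0 ∧ (x + y)⁻¹ ∈ A) := by
    intro x y hx hy hxn hyn
    rintro ⟨hw0, hwi⟩
    by_cases hv : x * (x + y)⁻¹ ∈ V.toSubring
    · have hpA : x * (x + y)⁻¹ ∈ A := A.mul_mem hx hwi
      have hpR : x * (x + y)⁻¹ ∈ R := hmemR _ hpA hv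
      rcases IsLocalRing.isUnit_or_isUnit_one_sub_self (⟨x * (x + y)⁻¹, hpR⟩ : ↥R) with h | h
      · rw [hUR] at h
        refine hxn ⟨?_, ?_⟩
        · intro h0
          exact h.1 (by simp [h0])
        · have hx0 : x ≠ 0 := fun h0 => h.1 (by simp [h0])
          have : x⁻¹ = (x * (x + y)⁻¹)⁻¹ * (x + y)⁻¹ := by
            rw [mul_inv, inv_inv]
            field_simp
          rw [this]
          exact A.mul_mem (hRA _ h.2) hwi
      · rw [hUR] at h
        have hcoe : ((1 - (⟨x * (x + y)⁻¹, hpR⟩ : ↥R) : ↥R) : K) = y * (x + y)⁻¹ := by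
          push_cast
          field_simp
          ring
        rw [hcoe] at h
        refine hyn ⟨?_, ?_⟩
        · intro h0
          exact h.1 (by simp [h0])
        · have hy0 : y ≠ 0 := fun h0 => h.1 (by simp [h0])
          have : y⁻¹ = (y * (x + y)⁻¹)⁻¹ * (x + y)⁻¹ := by
            rw [mul_inv, inv_inv]
            field_simp
          rw [this]
          exact A.mul_mem (hRA _ h.2) hwi
    · have hpA : x * (x + y)⁻¹ ∈ A := A.mul_mem hx hwi
      obtain ⟨hp0, hpi⟩ := L2u _ hpA hv
      have hx0 : x ≠ 0 := fun h0 => hp0 (by simp [h0])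
      refine hxn ⟨hx0, ?_⟩
      have : x⁻¹ = (x * (x + y)⁻¹)⁻¹ * (x + y)⁻¹ := by
        rw [mul_inv, inv_inv]
        field_simp
      rw [this]
      exact A.mul_mem hpi hwi
  -- A is local
  have hAloc : IsLocalRing ↥A := by
    apply IsLocalRing.of_nonunits_add
    intro a b ha hb
    rw [mem_nonunits_iff] at ha hb ⊢
    rw [hUA] at ha hb ⊢
    have hcoe : ((a + b : ↥A) : K) = (a : K) + (b : K) := by push_cast; ring
    rw [hcoe]
    exact L4 _ _ a.2 b.2 ha hb
  -- the prime ideal P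
  let P : Ideal ↥R :=
    { carrier := {x : ↥R | ¬ IsUnit (⟨(x : K), (Subring.mem_inf.mp x.2).1⟩ : ↥A)}
      zero_mem' := by
        intro h
        rw [hUA] at h
        exact h.1 (by simp)
      add_mem' := by
        intro x y hx hy hu
        rw [hUA] at hu
        have hcoe : ((x + y : ↥R) : K) = (x : K) + (y : K) := by push_cast; ring
        rw [hcoe] at hu
        exact L4 _ _ (hRA _ x.2) (hRA _ y.2)
          (fun hc => hx ((hUA _).mpr hc)) (fun hc => hy ((hUA _).mpr hc)) hu
      smul_mem' := by
        intro c x hx hu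
        rw [hUA] at hu
        have hcoe : ((c • x : ↥R) : K) = (c : K) * (x : K) := by
          rw [smul_eq_mul]; push_cast; ring
        rw [hcoe] at hu
        apply hx
        rw [hUA]
        have hx0 : (x : K) ≠ 0 := right_ne_zero_of_mul hu.1
        have hc0 : (c : K) ≠ 0 := left_ne_zero_of_mul hu.1
        refine ⟨hx0, ?_⟩
        have : (x : K)⁻¹ = (c : K) * ((c : K) * (x : K))⁻¹ := by
          rw [mul_inv]
          field_simp
        rw [this]
        exact A.mul_mem (hRA _ c.2) hu.2 }
  have hPmem : ∀ x : ↥R, x ∈ P ↔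
      ¬ IsUnit (⟨(x : K), (Subring.mem_inf.mp x.2).1⟩ : ↥A) := fun x => Iff.rfl
  have hP0 : ∀ z : ↥R, (z : K) = 0 → z ∈ P := by
    intro z hz
    rw [hPmem]
    intro hu
    rw [hUA] at hu
    exact hu.1 hz
  have hPnot : ∀ z : ↥R, z ∉ P → ((z : K) ≠ 0 ∧ (z : K)⁻¹ ∈ A) := by
    intro z hz
    have := not_not.mp (fun h => hz ((hPmem z).mpr h))
    rw [hUA] at this
    exact this
  have hPprime : P.IsPrime := by
    constructor
    · intro htop
      have h1 : (1 : ↥R) ∈ P := htop ▸ Submodule.mem_top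
      rw [hPmem] at h1
      apply h1
      rw [hUA]
      refine ⟨by simp, by simpa using A.one_mem⟩
    · intro x y hxy
      by_contra hcon
      push_neg at hcon
      obtain ⟨hx, hy⟩ := hcon
      obtain ⟨hx0, hxi⟩ := hPnot x hx
      obtain ⟨hy0, hyi⟩ := hPnot y hy
      rw [hPmem] at hxy
      apply hxy
      rw [hUA]
      have hcoe : ((x * y : ↥R) : K) = (x : K) * (y : K) := by push_cast; ring
      rw [hcoe, mul_inv]
      exact ⟨mul_ne_zero hx0 hy0, A.mul_mem hxi hyi⟩
  -- set equality
  have hset : (A : Set K) = {y : K | ∃ a s' : ↥R, s' ∉ P ∧ y = (a : K) / (s' : K)} := by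
    ext y
    constructor
    · intro hy
      by_cases hv : y ∈ V.toSubring
      · refine ⟨⟨y, hmemR _ hy hv⟩, 1, ?_, by simp⟩
        intro h1
        rw [hPmem] at h1
        apply h1
        rw [hUA]
        exact ⟨by simp, by simpa using A.one_mem⟩
      · obtain ⟨x, b, hxR, hbR, hx, hb, heq⟩ := L2 y hy hv
        refine ⟨⟨x, hxR⟩, ⟨b, hbR⟩, ?_, heq⟩
        intro hmem
        rw [hPmem] at hmem
        exact hmem ((hUA _).mpr ⟨hb.1, hb.2⟩)
    · rintro ⟨a, s', hs', rfl⟩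
      obtain ⟨h0, hi⟩ := hPnot s' hs'
      show (a : K) / (s' : K) ∈ A
      rw [div_eq_mul_inv]
      exact A.mul_mem (hRA _ a.2) hi
  -- valuation property mod P
  have hval : ∀ x y : ↥R, (∃ c : ↥R, y - c * x ∈ P) ∨ (∃ c : ↥R, x - c * y ∈ P) := by
    intro x y
    by_cases hx0 : (x : K) = 0
    · right
      refine ⟨0, hP0 _ ?_⟩
      push_cast
      rw [hx0]
      ring
    by_cases hy0 : (y : K) = 0
    · left
      refine ⟨0, hP0 _ ?_⟩
      push_cast
      rw [hy0]
      ring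
    by_cases h1 : (x : K) / (y : K) ∈ R
    · right
      refine ⟨⟨_, h1⟩, hP0 _ ?_⟩
      have hc : ((⟨(x : K) / (y : K), h1⟩ : ↥R) : K) = (x : K) / (y : K) := rfl
      push_cast [hc]
      field_simp
      ring
    by_cases h2 : (y : K) / (x : K) ∈ R
    · left
      refine ⟨⟨_, h2⟩, hP0 _ ?_⟩
      have hc : ((⟨(y : K) / (x : K), h2⟩ : ↥R) : K) = (y : K) / (x : K) := rfl
      push_cast [hc]
      field_simp
      ring
    rcases V.mem_or_inv_mem ((x : K) / (y : K)) with hv | hv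
    · -- x/y ∈ V but ∉ A ; then x is a nonunit of A
      right
      refine ⟨0, ?_⟩
      have hxy : x - 0 * y = x := by
        apply Subtype.ext
        push_cast
        ring
      rw [hxy, hPmem]
      intro hu
      rw [hUA] at hu
      have hyx : (y : K) / (x : K) ∈ A := by
        rw [div_eq_mul_inv]
        exact A.mul_mem (hRA _ y.2) hu.2
      by_cases hvv : (y : K) / (x : K) ∈ V.toSubring
      · exact h2 (hmemR _ hyx hvv)
      · have h3 := (L2u _ hyx hvv).2
        rw [inv_div] at h3
        exact h1 (hmemR _ h3 ((V.mem_toSubring _).mpr hv))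
    · rw [inv_div] at hv
      left
      refine ⟨0, ?_⟩
      have hxy : y - 0 * x = y := by
        apply Subtype.ext
        push_cast
        ring
      rw [hxy, hPmem]
      intro hu
      rw [hUA] at hu
      have hyx : (x : K) / (y : K) ∈ A := by
        rw [div_eq_mul_inv]
        exact A.mul_mem (hRA _ x.2) hu.2
      by_cases hvv : (x : K) / (y : K) ∈ V.toSubring
      · exact h1 (hmemR _ hyx hvv)
      · have h3 := (L2u _ hyx hvv).2
        rw [inv_div] at h3
        exact h2 (hmemR _ h3 ((V.mem_toSubring _).mpr hv))
  -- fraction-field property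
  have hfive : ∀ a : K, a ∈ A → ∃ x y : ↥R, y ∉ P ∧ ∃ h : (y : K) * a - (x : K) ∈ A,
      ¬ IsUnit (⟨(y : K) * a - (x : K), h⟩ : ↥A) := by
    intro a ha
    have hmem : a ∈ (A : Set K) := ha
    rw [hset] at hmem
    obtain ⟨x, y, hyP, heq⟩ := hmem
    obtain ⟨hy0, _⟩ := hPnot y hyP
    have hAmem : (y : K) * a - (x : K) ∈ A := A.sub_mem (A.mul_mem (hRA _ y.2) ha) (hRA _ x.2)
    refine ⟨x, y, hyP, hAmem, ?_⟩
    intro hu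
    rw [hUA] at hu
    apply hu.1
    have hc : ((⟨(y : K) * a - (x : K), hAmem⟩ : ↥A) : K) = (y : K) * a - (x : K) := rfl
    rw [hc, heq]
    field_simp
    ring
  exact ⟨hAloc, P, hPprime, hPmem, hset, hval, hfive⟩
end

section
/- Let D be an integral domain, m a maximal ideal of D, and t an indeterminate. Then the extension m·D(t) is a maximal ideal of the Nagata ring D(t), and the localization of D(t) at m·D(t) equals D_m(t). Consequently D(t) = ⋂_{m maximal} D_m(t). -/
set_option maxHeartbeats 1000000
set_option synthInstance.maxHeartbeats 200000

open Polynomial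
variable {K : Type*} [Field K]

/-- A polynomial has *unit content* if its coefficients generate the unit ideal. -/
def UnitContent {R : Type*} [CommRing R] (p : Polynomial R) : Prop :=
  Ideal.span (Set.range p.coeff) = ⊤

theorem unitContent_one {R : Type*} [CommRing R] : UnitContent (1 : Polynomial R) := by
  rw [UnitContent, Ideal.eq_top_iff_one]
  exact Ideal.subset_span ⟨0, by simp⟩

theorem unitContent_mul {R : Type*} [CommRing R] [Nontrivial R] {p q : Polynomial R}
    (hp : UnitContent p) (hq : UnitContent q) : UnitContent (p * q) := by
  by_contra h
  obtain ⟨m, hm, hle⟩ := Ideal.exists_le_maximal _ ((Ideal.ne_top_iff_one _).mpr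
    (fun h1 => h (by rwa [UnitContent, Ideal.eq_top_iff_one])))
  have key : ∀ r : Polynomial R, UnitContent r →
      Polynomial.map (Ideal.Quotient.mk m) r ≠ 0 := by
    intro r hr hr0
    have : Set.range r.coeff ⊆ (m : Set R) := by
      rintro _ ⟨n, rfl⟩
      have := congrArg (fun s => Polynomial.coeff s n) hr0
      simp only [Polynomial.coeff_map, Polynomial.coeff_zero] at this
      exact Ideal.Quotient.eq_zero_iff_mem.mp this
    have : Ideal.span (Set.range r.coeff) ≤ m := Ideal.span_le.mpr this
    rw [hr] at this
    exact hm.ne_top (top_le_iff.mp this)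
  have h0 : Polynomial.map (Ideal.Quotient.mk m) (p * q) ≠ 0 := by
    rw [Polynomial.map_mul]
    exact mul_ne_zero (key p hp) (key q hq)
  obtain ⟨n, hn⟩ : ∃ n, (Polynomial.map (Ideal.Quotient.mk m) (p * q)).coeff n ≠ 0 := by
    by_contra hc
    push_neg at hc
    exact h0 (Polynomial.ext fun n => by simpa using hc n)
  rw [Polynomial.coeff_map] at hn
  exact hn (Ideal.Quotient.eq_zero_iff_mem.mpr
    (hle (Ideal.subset_span ⟨n, rfl⟩)))

/-- The natural map from polynomials over a subring `B ⊆ K` to `RatFunc K`. -/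
noncomputable def nagataHom (B : Subring K) : Polynomial B →+* RatFunc K :=
  (algebraMap (Polynomial K) (RatFunc K)).comp (Polynomial.mapRingHom B.subtype)

theorem nagataHom_injective (B : Subring K) : Function.Injective (nagataHom B) :=
  (RatFunc.algebraMap_injective K).comp
    (Polynomial.map_injective _ B.subtype_injective)

theorem nagataHom_ne_zero {B : Subring K} {q : Polynomial B} (hq : UnitContent q) :
    nagataHom B q ≠ 0 := by
  intro h0
  have : q = 0 := nagataHom_injective B (by simpa using h0)
  subst this
  rw [UnitContent] at hq
  have : Set.range (0 : Polynomial B).coeff = {0} := by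
    ext x; simp [eq_comm]
  rw [this] at hq
  simp at hq

/-- The Nagata ring `B(t)` of a subring `B` of a field `K`, realized as a subring of the
rational function field `RatFunc K`: the set of fractions `f/g` of polynomials with
coefficients in `B` such that the content of `g` is the unit ideal of `B`. -/
noncomputable def Subring.nagata (B : Subring K) : Subring (RatFunc K) where
  carrier := { x | ∃ p q : Polynomial B, UnitContent q ∧ x = nagataHom B p / nagataHom B q }
  zero_mem' := ⟨0, 1, unitContent_one, by simp⟩
  one_mem' := ⟨1, 1, unitContent_one, by simp⟩
  add_mem' := by
    rintro x y ⟨p, q, hq, rfl⟩ ⟨p', q', hq', rfl⟩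
    refine ⟨p * q' + p' * q, q * q', unitContent_mul hq hq', ?_⟩
    rw [div_add_div _ _ (nagataHom_ne_zero hq) (nagataHom_ne_zero hq'),
      (nagataHom B).map_add, (nagataHom B).map_mul, (nagataHom B).map_mul,
      (nagataHom B).map_mul]
    ring
  neg_mem' := by
    rintro x ⟨p, q, hq, rfl⟩
    exact ⟨-p, q, hq, by rw [(nagataHom B).map_neg, neg_div]⟩
  mul_mem' := by
    rintro x y ⟨p, q, hq, rfl⟩ ⟨p', q', hq', rfl⟩
    exact ⟨p * p', q * q', unitContent_mul hq hq', by rw [(nagataHom B).map_mul,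
      (nagataHom B).map_mul, div_mul_div_comm]⟩

theorem mem_nagata_C (B : Subring K) (b : B) : RatFunc.C (b : K) ∈ B.nagata := by
  refine ⟨Polynomial.C b, 1, unitContent_one, ?_⟩
  simp [nagataHom, RatFunc.algebraMap_C]

/-- The canonical ring homomorphism `B → B(t)` sending `b` to the constant `b`. -/
noncomputable def nagataC (B : Subring K) : B →+* B.nagata where
  toFun b := ⟨RatFunc.C (b : K), mem_nagata_C B b⟩
  map_one' := Subtype.ext (by simp)
  map_mul' x y := Subtype.ext (by push_cast; simp)
  map_zero' := Subtype.ext (by simp)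
  map_add' x y := Subtype.ext (by push_cast; simp)

/-- The localization `D_m` of a subring `D` of a field `K` at a prime ideal `m`,
realized as a subring of `K`. -/
def Subring.locAt (D : Subring K) (m : Ideal D) (hm : m.IsPrime) : Subring K where
  carrier := {x | ∃ a s : D, s ∉ m ∧ x = (a : K) / (s : K)}
  zero_mem' := ⟨0, 1, fun h => hm.ne_top (m.eq_top_of_isUnit_mem h isUnit_one), by simp⟩
  one_mem' := ⟨1, 1, fun h => hm.ne_top (m.eq_top_of_isUnit_mem h isUnit_one), by simp⟩
  add_mem' := by
    rintro x y ⟨a, s, hs, rfl⟩ ⟨a', s', hs', rfl⟩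
    have h0 : (s : K) ≠ 0 := fun h => hs (by
      have : s = 0 := Subtype.ext h
      rw [this]; exact m.zero_mem)
    have h0' : (s' : K) ≠ 0 := fun h => hs' (by
      have : s' = 0 := Subtype.ext h
      rw [this]; exact m.zero_mem)
    refine ⟨a * s' + a' * s, s * s',
      fun h => ((hm.mem_or_mem h).elim hs hs'), ?_⟩
    rw [div_add_div _ _ h0 h0']
    push_cast
    ring_nf
  neg_mem' := by
    rintro x ⟨a, s, hs, rfl⟩
    exact ⟨-a, s, hs, by push_cast; rw [neg_div]⟩
  mul_mem' := by
    rintro x y ⟨a, s, hs, rfl⟩ ⟨a', s', hs', rfl⟩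
    exact ⟨a * a', s * s', fun h => ((hm.mem_or_mem h).elim hs hs'),
      by push_cast; rw [div_mul_div_comm]⟩

/-! ### Auxiliary lemmas -/

section Aux

theorem nagataHom_apply (B : Subring K) (p : Polynomial B) :
    nagataHom B p = algebraMap (Polynomial K) (RatFunc K) (p.map B.subtype) := rfl

theorem mem_nagata_iff {B : Subring K} {x : RatFunc K} :
    x ∈ B.nagata ↔ ∃ p q : Polynomial B, UnitContent q ∧ x = nagataHom B p / nagataHom B q :=
  Iff.rfl

theorem unitContent_iff {R : Type*} [CommRing R] {p : Polynomial R} :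
    UnitContent p ↔ (1 : R) ∈ Ideal.span (Set.range p.coeff) := by
  rw [UnitContent, Ideal.eq_top_iff_one]

theorem map_mk_ne_zero {R : Type*} [CommRing R] {m : Ideal R} (hm : m ≠ ⊤) {r : Polynomial R}
    (hr : UnitContent r) : Polynomial.map (Ideal.Quotient.mk m) r ≠ 0 := by
  intro hr0
  have h1 : Set.range r.coeff ⊆ (m : Set R) := by
    rintro _ ⟨n, rfl⟩
    have := congrArg (fun s => Polynomial.coeff s n) hr0
    simp only [Polynomial.coeff_map, Polynomial.coeff_zero] at this
    exact Ideal.Quotient.eq_zero_iff_mem.mp this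
  have h2 : Ideal.span (Set.range r.coeff) ≤ m := Ideal.span_le.mpr h1
  rw [hr] at h2
  exact hm (top_le_iff.mp h2)

theorem coeff_mem_of_mul {R : Type*} [CommRing R] {m : Ideal R} (hm : m.IsPrime)
    {p q : Polynomial R} (hq : UnitContent q) (h : ∀ n, (p * q).coeff n ∈ m) :
    ∀ n, p.coeff n ∈ m := by
  have h0 : Polynomial.map (Ideal.Quotient.mk m) (p * q) = 0 := by
    ext n
    simp only [Polynomial.coeff_map, Polynomial.coeff_zero]
    exact Ideal.Quotient.eq_zero_iff_mem.mpr (h n)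
  rw [Polynomial.map_mul] at h0
  have hq0 := map_mk_ne_zero hm.ne_top hq
  have hp0 : Polynomial.map (Ideal.Quotient.mk m) p = 0 :=
    (mul_eq_zero.mp h0).resolve_right hq0
  intro n
  have := congrArg (fun s => Polynomial.coeff s n) hp0
  simp only [Polynomial.coeff_map, Polynomial.coeff_zero] at this
  exact Ideal.Quotient.eq_zero_iff_mem.mp this

theorem nagataHom_map_inclusion {B C : Subring K} (h : B ≤ C) (p : Polynomial B) :
    nagataHom C (p.map (Subring.inclusion h)) = nagataHom B p := by
  simp only [nagataHom_apply, Polynomial.map_map]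
  have : C.subtype.comp (Subring.inclusion h) = B.subtype := RingHom.ext fun x => rfl
  rw [this]

theorem unitContent_map_inclusion {B C : Subring K} (h : B ≤ C) {p : Polynomial B}
    (hp : UnitContent p) : UnitContent (p.map (Subring.inclusion h)) := by
  rw [unitContent_iff]
  have h1 : (1 : B) ∈ Ideal.span (Set.range p.coeff) := unitContent_iff.mp hp
  have h2 := Ideal.mem_map_of_mem (Subring.inclusion h) h1
  rw [Ideal.map_span, map_one] at h2
  refine Ideal.span_mono ?_ h2
  rintro _ ⟨_, ⟨n, rfl⟩, rfl⟩
  exact ⟨n, Polynomial.coeff_map _ _⟩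

theorem unitContent_of_isUnit_coeff {R : Type*} [CommRing R] {p : Polynomial R} {n : ℕ}
    (h : IsUnit (p.coeff n)) : UnitContent p :=
  Ideal.eq_top_of_isUnit_mem _ (Ideal.subset_span ⟨n, rfl⟩) h

theorem one_not_mem_of_prime {D : Subring K} {m : Ideal D} (hm : m.IsPrime) : (1 : D) ∉ m :=
  fun h => hm.ne_top (m.eq_top_of_isUnit_mem h isUnit_one)

theorem coe_ne_zero_of_not_mem {D : Subring K} {m : Ideal D} {s : D} (hs : s ∉ m) :
    (s : K) ≠ 0 := fun h => hs (by
  have : s = 0 := Subtype.ext h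
  rw [this]; exact m.zero_mem)

theorem le_locAt {D : Subring K} {m : Ideal D} (hm : m.IsPrime) : D ≤ D.locAt m hm := by
  intro x hx
  exact ⟨⟨x, hx⟩, 1, one_not_mem_of_prime hm, by simp⟩

theorem ratFuncC_ne_zero {c : K} (hc : c ≠ 0) : (RatFunc.C c : RatFunc K) ≠ 0 :=
  fun h => hc (RingHom.injective (RatFunc.C : K →+* RatFunc K) (by rw [h, map_zero]))

theorem nagataHom_C (B : Subring K) (a : B) :
    nagataHom B (Polynomial.C a) = RatFunc.C (a : K) := by
  rw [nagataHom_apply, Polynomial.map_C, RatFunc.algebraMap_C]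
  rfl

/-- The extension of `m` to the localization `D_m`, as an ideal. -/
def locMaxSet (D : Subring K) (m : Ideal D) (hm : m.IsPrime) : Ideal (D.locAt m hm) where
  carrier := {x | ∃ a s : D, a ∈ m ∧ s ∉ m ∧ (x : K) = (a : K) / (s : K)}
  zero_mem' := ⟨0, 1, m.zero_mem, one_not_mem_of_prime hm, by simp⟩
  add_mem' := by
    rintro x y ⟨a, s, ha, hs, hx⟩ ⟨a', s', ha', hs', hy⟩
    refine ⟨a * s' + a' * s, s * s',
      m.add_mem (m.mul_mem_right _ ha) (m.mul_mem_right _ ha'),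
      fun h => (hm.mem_or_mem h).elim hs hs', ?_⟩
    have h0 := coe_ne_zero_of_not_mem hs
    have h0' := coe_ne_zero_of_not_mem hs'
    push_cast
    rw [hx, hy, div_add_div _ _ h0 h0']
    ring_nf
  smul_mem' := by
    rintro c x ⟨a, s, ha, hs, hx⟩
    obtain ⟨b, u, hu, hc⟩ := c.2
    refine ⟨b * a, u * s, m.mul_mem_left _ ha,
      fun h => (hm.mem_or_mem h).elim hu hs, ?_⟩
    have hcx : ((c • x : D.locAt m hm) : K) = (c : K) * (x : K) := rfl
    rw [hcx, hc, hx]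
    push_cast
    rw [div_mul_div_comm]

theorem locMaxSet_ne_top {D : Subring K} {m : Ideal D} (hm : m.IsPrime) :
    locMaxSet D m hm ≠ ⊤ := by
  rw [Ideal.ne_top_iff_one]
  rintro ⟨a, s, ha, hs, h1⟩
  have h0 := coe_ne_zero_of_not_mem hs
  have h1' : ((1 : D.locAt m hm) : K) = (a : K) / (s : K) := h1
  rw [OneMemClass.coe_one] at h1'
  have : (a : K) = (s : K) := (div_eq_one_iff_eq h0).mp h1'.symm
  exact hs ((Subtype.ext this : a = s) ▸ ha)

theorem exists_coeff_not_mem_locMaxSet {D : Subring K} {m : Ideal D} (hm : m.IsPrime)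
    {g : Polynomial (D.locAt m hm)} (hg : UnitContent g) :
    ∃ n, g.coeff n ∉ locMaxSet D m hm := by
  by_contra h
  push_neg at h
  have hle : Ideal.span (Set.range g.coeff) ≤ locMaxSet D m hm :=
    Ideal.span_le.mpr (by rintro _ ⟨n, rfl⟩; exact h n)
  rw [hg] at hle
  exact locMaxSet_ne_top hm (top_le_iff.mp hle)

theorem nagata_mono {B C : Subring K} (h : B ≤ C) : B.nagata ≤ C.nagata := by
  intro x hx
  obtain ⟨p, q, hq, rfl⟩ := mem_nagata_iff.mp hx
  exact mem_nagata_iff.mpr ⟨p.map (Subring.inclusion h), q.map (Subring.inclusion h),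
    unitContent_map_inclusion h hq,
    by rw [nagataHom_map_inclusion, nagataHom_map_inclusion]⟩

theorem exists_clear_denom {D : Subring K} {m : Ideal D} (hm : m.IsPrime)
    (f : Polynomial (D.locAt m hm)) :
    ∃ S : D, S ∉ m ∧ ∃ F : Polynomial D,
      ∀ n, (F.coeff n : K) = (S : K) * ((f.coeff n : D.locAt m hm) : K) := by
  induction f using Polynomial.induction_on' with
  | add p q hp hq =>
    obtain ⟨S, hS, F, hF⟩ := hp
    obtain ⟨T, hT, G, hG⟩ := hq
    refine ⟨S * T, fun h => (hm.mem_or_mem h).elim hS hT,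
      Polynomial.C T * F + Polynomial.C S * G, fun n => ?_⟩
    have hc : ((Polynomial.C T * F + Polynomial.C S * G).coeff n : K)
        = (T : K) * (F.coeff n : K) + (S : K) * (G.coeff n : K) := by
      push_cast [Polynomial.coeff_add, Polynomial.coeff_C_mul]
      ring
    rw [hc, hF, hG]
    push_cast [Polynomial.coeff_add]
    ring
  | monomial n a =>
    obtain ⟨b, s, hs, hb⟩ := a.2
    have h0 := coe_ne_zero_of_not_mem hs
    refine ⟨s, hs, Polynomial.monomial n b, fun k => ?_⟩
    by_cases hk : k = n
    · subst hk
      simp only [Polynomial.coeff_monomial, if_pos rfl, if_true, eq_self_iff_true]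
      rw [hb]
      field_simp
    · simp [Polynomial.coeff_monomial, hk, Ne.symm hk]

theorem exists_rep_of_mem_locNagata {D : Subring K} {m : Ideal D} (hm : m.IsPrime)
    {x : RatFunc K} (hx : x ∈ (D.locAt m hm).nagata) :
    ∃ F G : Polynomial D, (∃ n, G.coeff n ∉ m) ∧ nagataHom D G ≠ 0 ∧
      x = nagataHom D F / nagataHom D G := by
  obtain ⟨f, g, hg, rfl⟩ := mem_nagata_iff.mp hx
  obtain ⟨S, hS, F, hF⟩ := exists_clear_denom hm f
  obtain ⟨T, hT, G, hG⟩ := exists_clear_denom hm g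
  have hS0 : (S : K) ≠ 0 := coe_ne_zero_of_not_mem hS
  have hT0 : (T : K) ≠ 0 := coe_ne_zero_of_not_mem hT
  -- nagataHom identities
  have keyF : nagataHom D F = RatFunc.C (S : K) * nagataHom (D.locAt m hm) f := by
    rw [nagataHom_apply, nagataHom_apply, ← RatFunc.algebraMap_C (S : K), ← map_mul]
    congr 1
    ext n
    simp only [Polynomial.coeff_map, Polynomial.coeff_C_mul]
    exact hF n
  have keyG : nagataHom D G = RatFunc.C (T : K) * nagataHom (D.locAt m hm) g := by
    rw [nagataHom_apply, nagataHom_apply, ← RatFunc.algebraMap_C (T : K), ← map_mul]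
    congr 1
    ext n
    simp only [Polynomial.coeff_map, Polynomial.coeff_C_mul]
    exact hG n
  have hg0 : nagataHom (D.locAt m hm) g ≠ 0 := nagataHom_ne_zero hg
  obtain ⟨n, hn⟩ := exists_coeff_not_mem_locMaxSet hm hg
  refine ⟨Polynomial.C T * F, Polynomial.C S * G, ⟨n, ?_⟩, ?_, ?_⟩
  · -- (C S * G).coeff n ∉ m
    intro hmem
    apply hn
    refine ⟨(Polynomial.C S * G).coeff n, S * T, hmem,
      fun h => (hm.mem_or_mem h).elim hS hT, ?_⟩
    rw [Polynomial.coeff_C_mul]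
    push_cast
    rw [hG n]
    field_simp
  · rw [map_mul, nagataHom_C, keyG]
    exact mul_ne_zero (ratFuncC_ne_zero hS0) (mul_ne_zero (ratFuncC_ne_zero hT0) hg0)
  · rw [map_mul, map_mul, nagataHom_C, nagataHom_C, keyF, keyG,
      div_eq_div_iff hg0
        (mul_ne_zero (ratFuncC_ne_zero hS0) (mul_ne_zero (ratFuncC_ne_zero hT0) hg0))]
    ring

theorem mem_map_nagataC_iff {D : Subring K} {m : Ideal D} {x : D.nagata} :
    x ∈ Ideal.map (nagataC D) m ↔
      ∃ p q : Polynomial D, UnitContent q ∧ (∀ n, p.coeff n ∈ m) ∧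
        (x : RatFunc K) = nagataHom D p / nagataHom D q := by
  constructor
  · intro hx
    rw [Ideal.map, Ideal.span] at hx
    refine Submodule.span_induction ?_ ?_ ?_ ?_ hx
    · rintro _ ⟨a, ha, rfl⟩
      refine ⟨Polynomial.C a, 1, unitContent_one, fun n => ?_, ?_⟩
      · rw [Polynomial.coeff_C]
        split
        · exact ha
        · exact m.zero_mem
      · rw [map_one, div_one, nagataHom_C]
        rfl
    · exact ⟨0, 1, unitContent_one, fun n => by simp [m.zero_mem], by simp⟩
    · rintro x y _ _ ⟨p, q, hq, hpm, hx⟩ ⟨p', q', hq', hpm', hy⟩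
      refine ⟨p * q' + p' * q, q * q', unitContent_mul hq hq', fun n => ?_, ?_⟩
      · rw [Polynomial.coeff_add]
        refine m.add_mem ?_ ?_
        · rw [Polynomial.coeff_mul]
          exact m.sum_mem fun c _ => m.mul_mem_right _ (hpm c.1)
        · rw [Polynomial.coeff_mul]
          exact m.sum_mem fun c _ => m.mul_mem_right _ (hpm' c.1)
      · have hc : ((x + y : D.nagata) : RatFunc K) = (x : RatFunc K) + y := rfl
        rw [hc, hx, hy, div_add_div _ _ (nagataHom_ne_zero hq) (nagataHom_ne_zero hq'),
          map_add, map_mul, map_mul, map_mul]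
        ring_nf
    · rintro r x _ ⟨p, q, hq, hpm, hx⟩
      obtain ⟨p', q', hq', hr⟩ := r.2
      refine ⟨p' * p, q' * q, unitContent_mul hq' hq, fun n => ?_, ?_⟩
      · rw [Polynomial.coeff_mul]
        exact m.sum_mem fun c _ => m.mul_mem_left _ (hpm c.2)
      · have hc : ((r • x : D.nagata) : RatFunc K) = (r : RatFunc K) * x := rfl
        rw [hc, hr, hx, map_mul, map_mul, div_mul_div_comm]
  · rintro ⟨p, q, hq, hpm, hval⟩
    have hxsum : x = ∑ i ∈ p.support, nagataC D (p.coeff i) *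
        ⟨nagataHom D (Polynomial.X ^ i) / nagataHom D q,
          mem_nagata_iff.mpr ⟨Polynomial.X ^ i, q, hq, rfl⟩⟩ := by
      apply Subtype.ext
      push_cast
      rw [hval]
      have : ∀ i : ℕ, ((nagataC D (p.coeff i) : D.nagata) : RatFunc K)
          = nagataHom D (Polynomial.C (p.coeff i)) := fun i => (nagataHom_C D _).symm
      have hmap : nagataHom D p
          = ∑ i ∈ p.support, nagataHom D (Polynomial.C (p.coeff i) * Polynomial.X ^ i) := by
        conv_lhs => rw [p.as_sum_support]
        rw [map_sum]
        exact Finset.sum_congr rfl fun i _ => by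
          rw [Polynomial.C_mul_X_pow_eq_monomial]
      calc nagataHom D p / nagataHom D q
          = (∑ i ∈ p.support, nagataHom D (Polynomial.C (p.coeff i) * Polynomial.X ^ i))
              / nagataHom D q := by rw [hmap]
        _ = ∑ i ∈ p.support, ((nagataC D (p.coeff i) : D.nagata) : RatFunc K) *
              (nagataHom D (Polynomial.X ^ i) / nagataHom D q) := by
            rw [Finset.sum_div]
            refine Finset.sum_congr rfl fun i _ => ?_
            rw [this i, map_mul, mul_div_assoc]
    rw [hxsum]
    refine Ideal.sum_mem _ fun i _ => ?_
    exact Ideal.mul_mem_right _ _ (Ideal.mem_map_of_mem (nagataC D) (hpm i))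

theorem isUnit_inclusion_of_not_mem {D : Subring K} {m : Ideal D} (hm : m.IsPrime) {a : D}
    (ha : a ∉ m) : IsUnit (Subring.inclusion (le_locAt hm) a) := by
  have h0 : (a : K) ≠ 0 := coe_ne_zero_of_not_mem ha
  refine IsUnit.of_mul_eq_one
    ⟨(1 : K) / (a : K), ⟨1, a, ha, by push_cast; ring⟩⟩ ?_
  apply Subtype.ext
  show (a : K) * ((1 : K) / (a : K)) = 1
  field_simp

/-- The ideal of `D` generated by contents of possible denominators of `x`. -/
def denomIdeal (D : Subring K) (x : RatFunc K) : Ideal D where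
  carrier := {d | ∃ g F : Polynomial D, x * nagataHom D g = nagataHom D F ∧
      d ∈ Ideal.span (Set.range g.coeff)}
  zero_mem' := ⟨0, 0, by simp, Ideal.zero_mem _⟩
  add_mem' := by
    rintro d₁ d₂ ⟨g₁, F₁, h₁, hd₁⟩ ⟨g₂, F₂, h₂, hd₂⟩
    set N := g₂.natDegree + 1 with hN
    refine ⟨g₁ * Polynomial.X ^ N + g₂, F₁ * Polynomial.X ^ N + F₂, ?_, ?_⟩
    · rw [map_add, map_mul, map_add, map_mul, mul_add, ← mul_assoc, h₁, h₂]
    · have hg1 : Ideal.span (Set.range g₁.coeff) ≤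
          Ideal.span (Set.range (g₁ * Polynomial.X ^ N + g₂).coeff) := by
        refine Ideal.span_le.mpr ?_
        rintro _ ⟨k, rfl⟩
        have hz : g₂.coeff (k + N) = 0 :=
          Polynomial.coeff_eq_zero_of_natDegree_lt (by omega)
        have : (g₁ * Polynomial.X ^ N + g₂).coeff (k + N) = g₁.coeff k := by
          rw [Polynomial.coeff_add, Polynomial.coeff_mul_X_pow, hz, add_zero]
        rw [← this]
        exact Ideal.subset_span ⟨k + N, rfl⟩
      have hg2 : Ideal.span (Set.range g₂.coeff) ≤
          Ideal.span (Set.range (g₁ * Polynomial.X ^ N + g₂).coeff) := by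
        refine Ideal.span_le.mpr ?_
        rintro _ ⟨k, rfl⟩
        by_cases hk : k < N
        · have : (g₁ * Polynomial.X ^ N + g₂).coeff k = g₂.coeff k := by
            rw [Polynomial.coeff_add, Polynomial.coeff_mul_X_pow', if_neg (by omega), zero_add]
          rw [← this]
          exact Ideal.subset_span ⟨k, rfl⟩
        · rw [Polynomial.coeff_eq_zero_of_natDegree_lt (by omega)]
          exact Ideal.zero_mem _
      exact Ideal.add_mem _ (hg1 hd₁) (hg2 hd₂)
  smul_mem' := by
    rintro c d ⟨g, F, hgF, hd⟩
    exact ⟨g, F, hgF, Ideal.mul_mem_left _ c hd⟩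

theorem mem_nagata_of_forall_loc {D : Subring K} {x : RatFunc K}
    (hx : ∀ mm : MaximalSpectrum D,
      x ∈ (D.locAt mm.asIdeal mm.isMaximal.isPrime).nagata) : x ∈ D.nagata := by
  have htop : denomIdeal D x = ⊤ := by
    by_contra h
    obtain ⟨mm, hmax, hle⟩ := Ideal.exists_le_maximal _ h
    obtain ⟨F, G, ⟨n, hn⟩, hG0, hxv⟩ :=
      exists_rep_of_mem_locNagata hmax.isPrime (hx ⟨mm, hmax⟩)
    have hmem : G.coeff n ∈ denomIdeal D x :=
      ⟨G, F, by rw [hxv, div_mul_cancel₀ _ hG0], Ideal.subset_span ⟨n, rfl⟩⟩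
    exact hn (hle hmem)
  have h1 : (1 : D) ∈ denomIdeal D x := htop ▸ Submodule.mem_top
  obtain ⟨g, F, hgF, h1span⟩ := h1
  have hg : UnitContent g := Ideal.eq_top_iff_one _ |>.mpr h1span
  refine mem_nagata_iff.mpr ⟨F, g, hg, ?_⟩
  rw [eq_div_iff (nagataHom_ne_zero hg)]
  exact hgF

end Aux

/-- **Facts about Nagata rings (Section 2).**
Let `D` be an integral domain with quotient field `K` and `m` a maximal ideal of `D`.
Then the extension `m·D(t)` is a maximal ideal of the Nagata ring `D(t)`, the
localization of `D(t)` at `m·D(t)` equals `D_m(t)` (as subrings of the rational function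
field), and consequently `D(t) = ⋂_{m maximal} D_m(t)`. -/
theorem nagata_maximal_extension_localization_intersection
    (D : Subring K) (hfrac : ∀ x : K, ∃ a ∈ D, ∃ b ∈ D, b ≠ 0 ∧ x = a / b)
    (m : Ideal D) (hm : m.IsMaximal) :
    (Ideal.map (nagataC D) m).IsMaximal ∧
      {x : RatFunc K | ∃ a s : D.nagata, s ∉ Ideal.map (nagataC D) m ∧
          x = (a : RatFunc K) / (s : RatFunc K)} =
        ((D.locAt m hm.isPrime).nagata : Set (RatFunc K)) ∧
      D.nagata = ⨅ mm : MaximalSpectrum D,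
        (D.locAt mm.asIdeal mm.isMaximal.isPrime).nagata := by
  refine ⟨?_, ?_, ?_⟩
  · -- maximality of the extension
    rw [Ideal.isMaximal_iff]
    constructor
    · intro h1
      obtain ⟨p, q, hq, hpm, hval⟩ := mem_map_nagataC_iff.mp h1
      rw [OneMemClass.coe_one] at hval
      have hq0 := nagataHom_ne_zero hq
      have hpq : nagataHom D p = nagataHom D q := (div_eq_one_iff_eq hq0).mp hval.symm
      have hpq' : p = q := nagataHom_injective D hpq
      have hle : Ideal.span (Set.range q.coeff) ≤ m :=
        Ideal.span_le.mpr (by rintro _ ⟨n, rfl⟩; rw [← hpq']; exact hpm n)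
      rw [hq] at hle
      exact hm.ne_top (top_le_iff.mp hle)
    · intro J x hle hxm hxJ
      obtain ⟨p, q, hq, hval⟩ := mem_nagata_iff.mp x.2
      have hq0 := nagataHom_ne_zero hq
      have hpn : ∃ n, p.coeff n ∉ m := by
        by_contra h
        push_neg at h
        exact hxm (mem_map_nagataC_iff.mpr ⟨p, q, hq, h, hval⟩)
      obtain ⟨n, hn⟩ := hpn
      obtain ⟨b, c, hc, hbc⟩ := hm.exists_inv hn
      set N := p.natDegree + 1 with hNdef
      set P := p + Polynomial.C c * Polynomial.X ^ N with hPdef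
      have hpN : p.coeff N = 0 :=
        Polynomial.coeff_eq_zero_of_natDegree_lt (Nat.lt_succ_self _)
      have hPN : P.coeff N = c := by
        rw [hPdef, Polynomial.coeff_add, hpN, zero_add, Polynomial.coeff_C_mul,
          Polynomial.coeff_X_pow, if_pos rfl, mul_one]
      have hnN : n ≠ N := by
        intro h
        rw [h, hpN] at hn
        exact hn m.zero_mem
      have hPn : P.coeff n = p.coeff n := by
        rw [hPdef, Polynomial.coeff_add, Polynomial.coeff_C_mul,
          Polynomial.coeff_X_pow, if_neg hnN, mul_zero, add_zero]
      have hP : UnitContent P := by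
        rw [unitContent_iff]
        have h1 : (1 : D) = b * P.coeff n + P.coeff N := by
          rw [hPn, hPN]
          exact hbc.symm
        rw [h1]
        exact Ideal.add_mem _ (Ideal.mul_mem_left _ _ (Ideal.subset_span ⟨n, rfl⟩))
          (Ideal.subset_span ⟨N, rfl⟩)
      have hP0 := nagataHom_ne_zero hP
      set y : D.nagata := ⟨nagataHom D q / nagataHom D P,
        mem_nagata_iff.mpr ⟨q, P, hP, rfl⟩⟩ with hy
      have hxy : x * y - 1 ∈ Ideal.map (nagataC D) m := by
        refine mem_map_nagataC_iff.mpr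
          ⟨-(Polynomial.C c * Polynomial.X ^ N), P, hP, fun k => ?_, ?_⟩
        · rw [Polynomial.coeff_neg, Polynomial.coeff_C_mul, Polynomial.coeff_X_pow]
          refine neg_mem ?_
          split
          · rw [mul_one]; exact hc
          · rw [mul_zero]; exact m.zero_mem
        · have hval' : ((x * y - 1 : D.nagata) : RatFunc K)
              = (x : RatFunc K) * (y : RatFunc K) - 1 := rfl
          have hyv : ((y : D.nagata) : RatFunc K)
              = nagataHom D q / nagataHom D P := rfl
          have hPp : nagataHom D P
              = nagataHom D p + nagataHom D (Polynomial.C c * Polynomial.X ^ N) := by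
            rw [hPdef, map_add]
          have hPh : nagataHom D p
              + nagataHom D (Polynomial.C c * Polynomial.X ^ N) ≠ 0 := by
            rw [← hPp]; exact hP0
          rw [hval', hyv, hval, map_neg, hPp]
          have key : ∀ A H u : RatFunc K, u ≠ 0 → A + H ≠ 0 →
              A / u * (u / (A + H)) - 1 = -H / (A + H) := by
            intro A H u hu hAH
            field_simp
            ring
          exact key _ _ _ hq0 hPh
      have h1J := J.sub_mem (J.mul_mem_right y hxJ) (hle hxy)
      simpa using h1J
  · -- localization at the extension equals D_m(t)
    ext z
    simp only [Set.mem_setOf_eq, SetLike.mem_coe]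
    constructor
    · rintro ⟨a, s, hs, rfl⟩
      obtain ⟨p, q, hq, ha⟩ := mem_nagata_iff.mp a.2
      obtain ⟨p', q', hq', hs'⟩ := mem_nagata_iff.mp s.2
      have hpn : ∃ n, p'.coeff n ∉ m := by
        by_contra h
        push_neg at h
        exact hs (mem_map_nagataC_iff.mpr ⟨p', q', hq', h, hs'⟩)
      obtain ⟨n, hn⟩ := hpn
      have hp'0 : nagataHom D p' ≠ 0 := by
        intro h0
        have hz : p' = 0 := nagataHom_injective D (by simpa using h0)
        rw [hz] at hn
        exact hn (by simpa using m.zero_mem)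
      have hq0 := nagataHom_ne_zero hq
      have hq'0 := nagataHom_ne_zero hq'
      refine mem_nagata_iff.mpr ⟨(p * q').map (Subring.inclusion (le_locAt hm.isPrime)),
        (q * p').map (Subring.inclusion (le_locAt hm.isPrime)), ?_, ?_⟩
      · rw [Polynomial.map_mul]
        refine unitContent_mul (unitContent_map_inclusion _ hq) ?_
        refine unitContent_of_isUnit_coeff (n := n) ?_
        rw [Polynomial.coeff_map]
        exact isUnit_inclusion_of_not_mem hm.isPrime hn
      · rw [nagataHom_map_inclusion, nagataHom_map_inclusion, map_mul, map_mul, ha, hs']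
        field_simp
    · intro hz
      obtain ⟨F, G, ⟨n, hn⟩, hG0, hval⟩ := exists_rep_of_mem_locNagata hm.isPrime hz
      refine ⟨⟨nagataHom D F, mem_nagata_iff.mpr ⟨F, 1, unitContent_one, by simp⟩⟩,
        ⟨nagataHom D G, mem_nagata_iff.mpr ⟨G, 1, unitContent_one, by simp⟩⟩, ?_, hval⟩
      intro hmem
      obtain ⟨p, q, hq, hpm, hv⟩ := mem_map_nagataC_iff.mp hmem
      have hq0 := nagataHom_ne_zero hq
      have hGq : nagataHom D (G * q) = nagataHom D p := by
        rw [map_mul, show nagataHom D G = nagataHom D p / nagataHom D q from hv,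
          div_mul_cancel₀ _ hq0]
      have hGq' : G * q = p := nagataHom_injective D hGq
      have := coeff_mem_of_mul hm.isPrime hq (fun k => by rw [hGq']; exact hpm k) n
      exact hn this
  · -- intersection formula
    refine le_antisymm ?_ ?_
    · exact le_iInf fun mm => nagata_mono (le_locAt mm.isMaximal.isPrime)
    · intro x hx
      exact mem_nagata_of_forall_loc fun mm => Subring.mem_iInf.mp hx mm
end
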